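/- For all n ≥ k ≥ 1, the q-Stirling numbers of the second kind satisfy the generating function identity (as formal power series in a): a^k · q^{binom(k,2)} · [k]_q! / Π_{i=1}^k (1 − a·[i]_q) = Σ_{n≥k} [k]_q!·S_q(n,k)·a^n, equivalently a^k · q^{binom(k,2)} / Π_{i=1}^k (1 − a·[i]_q) = Σ_{n≥k} S_q(n,k)·a^n. -/

import Mathlib

noncomputable section

/-- The `q`-integer `[k]_q = 1 + q + ⋯ + q^{k-1}` as a polynomial in `q`. -/
def qint (k : ℕ) : Polynomial ℚ := ∑ i ∈ Finset.range k, Polynomial.X ^ i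

/-- The `q`-factorial `[k]_q!`. -/
def qfact (k : ℕ) : Polynomial ℚ := ∏ i ∈ Finset.Icc 1 k, qint i

/-- The `q`-Stirling numbers of the second kind:
`S_q(n,k) = q^{k-1} S_q(n-1,k-1) + [k]_q S_q(n-1,k)` with `S_q(n,k) = δ_{nk}` if `n=0` or `k=0`. -/
def Sq : ℕ → ℕ → Polynomial ℚ
  | 0, 0 => 1
  | 0, _+1 => 0
  | _+1, 0 => 0
  | n+1, k+1 => Polynomial.X ^ k * Sq n k + qint (k+1) * Sq n (k+1)

/-- `a^k q^{C(k,2)} [k]_q! / ∏_{i=1}^k (1 - a[i]_q) = ∑_{n} [k]_q! S_q(n,k) a^n`, and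
equivalently without the factor `[k]_q!`, as identities of formal power series in `a`
over `ℚ[q]` (the division is expressed by multiplying through by the denominator). -/
lemma Sq_zero_succ (k : ℕ) : Sq 0 (k+1) = 0 := rfl
lemma Sq_succ_zero (n : ℕ) : Sq (n+1) 0 = 0 := rfl

lemma rec_step (k : ℕ) :
    (1 - PowerSeries.C (R := Polynomial ℚ) (qint (k+1)) * PowerSeries.X) *
      PowerSeries.mk (fun n => Sq n (k+1)) =
    PowerSeries.C (R := Polynomial ℚ) (Polynomial.X ^ k) * PowerSeries.X *
      PowerSeries.mk (fun n => Sq n k) := by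
  apply PowerSeries.ext; intro n
  cases n with
  | zero =>
      simp [PowerSeries.coeff_zero_eq_constantCoeff, Sq_zero_succ]
  | succ n =>
      rw [sub_mul, one_mul, map_sub, mul_assoc, mul_assoc, PowerSeries.coeff_C_mul,
        PowerSeries.coeff_C_mul, PowerSeries.coeff_succ_X_mul, PowerSeries.coeff_succ_X_mul,
        PowerSeries.coeff_mk, PowerSeries.coeff_mk, PowerSeries.coeff_mk]
      show Polynomial.X ^ k * Sq n k + qint (k+1) * Sq n (k+1) - qint (k+1) * Sq n (k+1) = _
      ring

lemma key (k : ℕ) :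
    PowerSeries.C (R := Polynomial ℚ) (Polynomial.X ^ k.choose 2) *
        (PowerSeries.X : PowerSeries (Polynomial ℚ)) ^ k =
      (∏ i ∈ Finset.Icc 1 k, (1 - PowerSeries.C (R := Polynomial ℚ) (qint i) * PowerSeries.X)) *
        PowerSeries.mk (fun n => Sq n k) := by
  induction k with
  | zero =>
      have h0 : PowerSeries.mk (fun n => Sq n 0) = (1 : PowerSeries (Polynomial ℚ)) := by
        ext n
        cases n with
        | zero => simp [PowerSeries.coeff_zero_eq_constantCoeff]; rfl
        | succ n => simp [Sq_succ_zero, PowerSeries.coeff_one]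
      simp [h0]
  | succ k ih =>
      rw [Finset.prod_Icc_succ_top (by omega : 1 ≤ k + 1), mul_comm _ (1 - _), mul_assoc,
        ← mul_assoc, mul_comm (1 - PowerSeries.C (R := Polynomial ℚ) (qint (k+1)) * PowerSeries.X),
        mul_assoc, rec_step k, Nat.choose_succ_succ, Nat.choose_one_right, pow_add, map_mul,
        pow_succ]
      linear_combination (PowerSeries.C (R := Polynomial ℚ) (Polynomial.X ^ k) * PowerSeries.X) * ih

theorem stmt2 (k : ℕ) (hk : 1 ≤ k) :
    (PowerSeries.C (R := Polynomial ℚ) (qfact k * Polynomial.X ^ k.choose 2) *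
        (PowerSeries.X : PowerSeries (Polynomial ℚ)) ^ k =
      (∏ i ∈ Finset.Icc 1 k, (1 - PowerSeries.C (R := Polynomial ℚ) (qint i) * PowerSeries.X)) *
        PowerSeries.mk (fun n => qfact k * Sq n k)) ∧
    (PowerSeries.C (R := Polynomial ℚ) (Polynomial.X ^ k.choose 2) *
        (PowerSeries.X : PowerSeries (Polynomial ℚ)) ^ k =
      (∏ i ∈ Finset.Icc 1 k, (1 - PowerSeries.C (R := Polynomial ℚ) (qint i) * PowerSeries.X)) *
        PowerSeries.mk (fun n => Sq n k)) := by

  have hmk : PowerSeries.mk (fun n => qfact k * Sq n k) =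
      PowerSeries.C (R := Polynomial ℚ) (qfact k) * PowerSeries.mk (fun n => Sq n k) := by
    apply PowerSeries.ext; intro n
    simp [PowerSeries.coeff_C_mul]
  refine ⟨?_, key k⟩
  rw [hmk, map_mul]
  linear_combination PowerSeries.C (R := Polynomial ℚ) (qfact k) * key k
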